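/- arXiv:2006.11829 — 2 statements merged into one kernel-verified Lean document; each statement's English description precedes it below -/
import Mathlib

section
/- Let A be a 2m×2m real positive definite matrix. Then its symplectic numerical range is the closed half-line W_s(A) = [d₁(A), ∞), where d₁(A) is the smallest symplectic eigenvalue of A. -/
open Matrix Polynomial

noncomputable section
namespace Szego

/-- `J_{2m}`: direct sum of `m` copies of `[[0,1],[-1,0]]`. -/
def JMat (m : ℕ) : Matrix (Fin (2*m)) (Fin (2*m)) ℝ :=
  fun i j =>
    if (j : ℕ) = (i : ℕ) + 1 ∧ (i : ℕ) % 2 = 0 then 1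
    else if (i : ℕ) = (j : ℕ) + 1 ∧ (j : ℕ) % 2 = 0 then -1 else 0

/-- `d : Fin m → ℝ` is the increasingly ordered tuple of symplectic eigenvalues of the
`2m × 2m` real matrix `A`: the `d j` are positive, and the eigenvalues of `i J_{2m} A`
counted with algebraic multiplicity (i.e. the roots of its characteristic polynomial)
are exactly `± d j`. -/
def IsSymplecticSpectrum {m : ℕ} (A : Matrix (Fin (2*m)) (Fin (2*m)) ℝ)
    (d : Fin m → ℝ) : Prop :=
  Monotone d ∧ (∀ j, 0 < d j) ∧
    Matrix.charpoly (Complex.I • ((JMat m).map Complex.ofReal * A.map Complex.ofReal)) =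
      ∏ j, (X - C (d j : ℂ)) * (X + C (d j : ℂ))

/-- The symplectic numerical range
`W_s(A) = { (⟨u,Au⟩ + ⟨v,Av⟩)/2 : u,v ∈ ℝ^{2m}, ⟨u, J_{2m} v⟩ = 1 }`. -/
def symplecticNumericalRange {m : ℕ} (A : Matrix (Fin (2*m)) (Fin (2*m)) ℝ) : Set ℝ :=
  { x | ∃ u v : Fin (2*m) → ℝ, u ⬝ᵥ (JMat m).mulVec v = 1 ∧
      x = (u ⬝ᵥ A.mulVec u + v ⬝ᵥ A.mulVec v) / 2 }

section Helpers
variable {n : Type*} [Fintype n] [DecidableEq n] {R : Type*} [CommRing R]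

lemma JMat_apply (m : ℕ) (i j : Fin (2*m)) :
    JMat m i j = if (j : ℕ) = (i : ℕ) + 1 ∧ (i : ℕ) % 2 = 0 then 1
      else if (i : ℕ) = (j : ℕ) + 1 ∧ (j : ℕ) % 2 = 0 then -1 else 0 := rfl

lemma JMat_transpose (m : ℕ) : (JMat m)ᵀ = -(JMat m) := by
  ext i j
  simp only [transpose_apply, Matrix.neg_apply, JMat_apply]
  split_ifs <;> first | (exfalso; omega) | ring

lemma JMat_mul_JMat (m : ℕ) : JMat m * JMat m = -1 := by
  ext i k
  rw [mul_apply]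
  have hilt : (i : ℕ) < 2*m := i.isLt
  have hklt : (k : ℕ) < 2*m := k.isLt
  rcases Nat.even_or_odd (i : ℕ) with hi | hi
  · have hi2 : (i : ℕ) % 2 = 0 := Nat.even_iff.mp hi
    have hi1 : (i : ℕ) + 1 < 2*m := by omega
    rw [Finset.sum_eq_single (⟨(i:ℕ)+1, hi1⟩ : Fin (2*m))]
    · simp only [JMat_apply, Fin.val_mk, Matrix.neg_apply, Matrix.one_apply, Fin.ext_iff, true_and, and_true]
      split_ifs <;> first | (exfalso; omega) | norm_num
    · intro j _ hj
      have hj' : (j : ℕ) ≠ (i : ℕ) + 1 := fun h => hj (Fin.ext h)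
      have : JMat m i j = 0 := by
        rw [JMat_apply, if_neg (by omega), if_neg (by omega)]
      rw [this, zero_mul]
    · simp
  · have hi2 : (i : ℕ) % 2 = 1 := Nat.odd_iff.mp hi
    have hi1 : (i : ℕ) - 1 < 2*m := by omega
    rw [Finset.sum_eq_single (⟨(i:ℕ)-1, hi1⟩ : Fin (2*m))]
    · simp only [JMat_apply, Fin.val_mk, Matrix.neg_apply, Matrix.one_apply, Fin.ext_iff, true_and, and_true]
      split_ifs <;> first | (exfalso; omega) | norm_num
    · intro j _ hj
      have hj' : (j : ℕ) ≠ (i : ℕ) - 1 := fun h => hj (Fin.ext h)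
      have : JMat m i j = 0 := by
        rw [JMat_apply, if_neg (by omega), if_neg (by omega)]
      rw [this, zero_mul]
    · simp

lemma charpoly_conj_aux (P N Q : Matrix n n R) (h : P * Q = 1) :
    (P * N * Q).charpoly = N.charpoly := by
  have hQP : Q * P = 1 := mul_eq_one_comm.mp h
  have key : charmatrix (P * N * Q) =
      P.map C * charmatrix N * Q.map C := by
    unfold charmatrix
    rw [Matrix.mul_sub, Matrix.sub_mul]
    congr 1
    · -- P.map C * scalar X * Q.map C = scalar X
      have : (P.map C) * (Matrix.scalar n (X : R[X])) = Matrix.scalar n (X : R[X]) * (P.map C) :=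
        (Matrix.scalar_commute (X : R[X]) (fun r => (Commute.all _ _)) (P.map C)).symm
      rw [this, Matrix.mul_assoc]
      have : (P.map C) * (Q.map C) = 1 := by
        rw [← Matrix.map_mul (f := (C : R →+* R[X])), h]
        simp
      rw [this, Matrix.mul_one]
    · simp only [RingHom.mapMatrix_apply]
      rw [← Matrix.map_mul (f := (C : R →+* R[X])), ← Matrix.map_mul (f := (C : R →+* R[X]))]
  unfold Matrix.charpoly
  rw [key, Matrix.det_mul, Matrix.det_mul, mul_comm, ← mul_assoc]
  have : (Q.map C).det * (P.map C).det = 1 := by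
    rw [← Matrix.det_mul, ← Matrix.map_mul (f := (C : R →+* R[X])), hQP]
    simp
  rw [this, one_mul]

lemma eval_charpoly (M : Matrix n n R) (t : R) :
    M.charpoly.eval t = (Matrix.diagonal (fun _ => t) - M).det := by
  unfold Matrix.charpoly
  rw [← Polynomial.coe_evalRingHom, RingHom.map_det]
  congr 1
  ext i j
  by_cases hij : i = j <;>
  simp [charmatrix_apply, diagonal_apply, hij]


lemma eval_charpoly' {R : Type*} [CommRing R] (M : Matrix n n R) (t : R) :
    M.charpoly.eval t = (Matrix.diagonal (fun _ => t) - M).det := by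
  unfold Matrix.charpoly
  rw [← Polynomial.coe_evalRingHom, RingHom.map_det]
  congr 1
  ext i j
  by_cases hij : i = j <;>
  simp [charmatrix_apply, diagonal_apply, hij]

lemma herm_inv_quadform_bound (N : Matrix n n ℂ) (hN : N.IsHermitian) (c : ℝ) (hc : 0 < c)
    (hev : ∀ i, c ≤ |hN.eigenvalues i|) (w : n → ℂ) :
    ‖star w ⬝ᵥ N⁻¹ *ᵥ w‖ ≤ c⁻¹ * (star w ⬝ᵥ w).re := by
  set U : Matrix n n ℂ := (hN.eigenvectorUnitary : Matrix n n ℂ) with hU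
  set μ : n → ℝ := hN.eigenvalues with hμ
  have hμne : ∀ i, (μ i : ℂ) ≠ 0 := by
    intro i
    have := hev i
    simp only [Ne, Complex.ofReal_eq_zero]
    intro h; rw [h] at this; simp at this; linarith
  have hUstar : U * star U = 1 := Matrix.mem_unitaryGroup_iff.mp hN.eigenvectorUnitary.2
  have hstarU : star U * U = 1 := mul_eq_one_comm.mp hUstar
  set D' : Matrix n n ℂ := diagonal (fun i => (μ i : ℂ)⁻¹) with hD'
  have hNinv : N⁻¹ = U * D' * star U := by
    refine Matrix.inv_eq_right_inv ?_
    calc N * (U * D' * star U)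
        = U * diagonal (Complex.ofReal ∘ μ) * (star U * U) * D' * star U := by
          rw [hN.spectral_theorem, Unitary.conjStarAlgAut_apply]; noncomm_ring
      _ = U * (diagonal (Complex.ofReal ∘ μ) * D') * star U := by
          rw [hstarU]; noncomm_ring
      _ = 1 := by
          rw [hD', diagonal_mul_diagonal]
          have : (fun i => (Complex.ofReal ∘ μ) i * (μ i : ℂ)⁻¹) = fun _ => 1 := by
            funext i; exact mul_inv_cancel₀ (hμne i)
          rw [this, diagonal_one, Matrix.mul_one, hUstar]
  set cv : n → ℂ := star U *ᵥ w with hcv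
  have hstarcv : star cv = star w ᵥ* U := by
    rw [hcv, Matrix.star_mulVec, Matrix.star_eq_conjTranspose, conjTranspose_conjTranspose]
  have key : star w ⬝ᵥ N⁻¹ *ᵥ w = ∑ i, ((μ i)⁻¹ : ℂ) * Complex.normSq (cv i) := by
    rw [hNinv, ← Matrix.mulVec_mulVec, ← Matrix.mulVec_mulVec, Matrix.dotProduct_mulVec,
      ← hstarcv, ← hcv]
    rw [hD']
    simp only [dotProduct, Matrix.mulVec_diagonal, Pi.star_apply]
    congr 1; funext i
    have h1 : star (cv i) * cv i = (Complex.normSq (cv i) : ℂ) := by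
      rw [show (star (cv i)) = (starRingEnd ℂ) (cv i) from rfl,
        ← Complex.normSq_eq_conj_mul_self]
    linear_combination ((μ i : ℂ))⁻¹ * h1
  have hwc : (star w ⬝ᵥ w).re = ∑ i, Complex.normSq (cv i) := by
    have : star w ⬝ᵥ w = star cv ⬝ᵥ cv := by
      rw [hstarcv, hcv, ← Matrix.dotProduct_mulVec, Matrix.mulVec_mulVec, hUstar,
        Matrix.one_mulVec]
    rw [this]
    simp only [dotProduct, Pi.star_apply]
    rw [Complex.re_sum]
    congr 1; funext i
    have h1 : star (cv i) * cv i = (Complex.normSq (cv i) : ℂ) := by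
      rw [show (star (cv i)) = (starRingEnd ℂ) (cv i) from rfl,
        ← Complex.normSq_eq_conj_mul_self]
    rw [h1, Complex.ofReal_re]
  rw [key, hwc]
  calc ‖(∑ i, ((μ i)⁻¹ : ℂ) * Complex.normSq (cv i))‖
      ≤ ∑ i, ‖(((μ i)⁻¹ : ℂ) * Complex.normSq (cv i))‖ := by
        exact norm_sum_le _ _
    _ ≤ ∑ i, c⁻¹ * Complex.normSq (cv i) := by
        apply Finset.sum_le_sum
        intro i _
        rw [norm_mul]
        have h2 : ‖((Complex.normSq (cv i) : ℂ))‖ = Complex.normSq (cv i) := by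
          rw [Complex.norm_real, Real.norm_eq_abs, abs_of_nonneg (Complex.normSq_nonneg _)]
        have h3 : ‖(((μ i)⁻¹ : ℂ))‖ = |μ i|⁻¹ := by
          rw [← Complex.ofReal_inv, Complex.norm_real, Real.norm_eq_abs, abs_inv]
        rw [h2, h3]
        apply mul_le_mul_of_nonneg_right _ (Complex.normSq_nonneg _)
        exact inv_anti₀ hc (hev i)
    _ = c⁻¹ * ∑ i, Complex.normSq (cv i) := by rw [Finset.mul_sum]


lemma eig_abs_bound {m : ℕ} (hm : 0 < m) (d : Fin m → ℝ) (hmono : Monotone d)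
    (hpos : ∀ j, 0 < d j) (N : Matrix n n ℂ) (hN : N.IsHermitian)
    (hcp : N.charpoly = ∏ j, (X - C (d j : ℂ)) * (X + C (d j : ℂ))) (i : n) :
    d ⟨0, hm⟩ ≤ |hN.eigenvalues i| := by
  set μ : ℝ := hN.eigenvalues i with hμ
  have hev : N *ᵥ ⇑(hN.eigenvectorBasis i) = (μ : ℂ) • ⇑(hN.eigenvectorBasis i) := by
    have := hN.mulVec_eigenvectorBasis i
    rw [this]
    ext j; simp [Pi.smul_apply, Complex.real_smul, hμ]
  have hvne : (⇑(hN.eigenvectorBasis i) : n → ℂ) ≠ 0 :=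
    by simpa using hN.eigenvectorBasis.orthonormal.ne_zero i
  have hdet : (Matrix.diagonal (fun _ => (μ:ℂ)) - N).det = 0 := by
    rw [← Matrix.exists_mulVec_eq_zero_iff]
    refine ⟨⇑(hN.eigenvectorBasis i), hvne, ?_⟩
    rw [Matrix.sub_mulVec, hev]
    ext j
    simp [Matrix.mulVec_diagonal]
  have hroot : (N.charpoly.eval (μ:ℂ)) = 0 := by rw [eval_charpoly', hdet]
  rw [hcp] at hroot
  simp only [eval_prod, eval_mul, eval_sub, eval_add, eval_X, eval_C] at hroot
  rw [Finset.prod_eq_zero_iff] at hroot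
  obtain ⟨j, -, hj⟩ := hroot
  have : (μ:ℂ) = (d j : ℂ) ∨ (μ:ℂ) = -(d j : ℂ) := by
    rcases mul_eq_zero.mp hj with h | h
    · left; linear_combination h
    · right; linear_combination h
  have habs : |μ| = d j := by
    rcases this with h | h
    · have : μ = d j := by exact_mod_cast h
      rw [this, abs_of_pos (hpos j)]
    · have : μ = -(d j) := by exact_mod_cast h
      rw [this, abs_neg, abs_of_pos (hpos j)]
  rw [habs]
  exact hmono (by exact Fin.mk_le_of_le_val (Nat.zero_le _))

def cvec (u : n → ℝ) : n → ℂ := fun i => (u i : ℂ)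

lemma star_cvec (u : n → ℝ) : star (cvec u) = cvec u := by
  funext i; simp [cvec]

lemma map_mulVec (M : Matrix n n ℝ) (u : n → ℝ) :
    (M.map Complex.ofReal) *ᵥ (cvec u) = cvec (M *ᵥ u) := by
  funext i
  simp [Matrix.mulVec, dotProduct, cvec, Matrix.map_apply]

lemma cvec_dot (u v : n → ℝ) : (cvec u) ⬝ᵥ (cvec v) = ((u ⬝ᵥ v : ℝ) : ℂ) := by
  simp [dotProduct, cvec]

lemma quadform_expand (M : Matrix n n ℝ) (u v : n → ℝ) :
    star (cvec u + Complex.I • cvec v) ⬝ᵥ (M.map Complex.ofReal) *ᵥ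
      (cvec u + Complex.I • cvec v) =
    ((u ⬝ᵥ M *ᵥ u + v ⬝ᵥ M *ᵥ v : ℝ) : ℂ)
      + Complex.I * ((u ⬝ᵥ M *ᵥ v - v ⬝ᵥ M *ᵥ u : ℝ) : ℂ) := by
  have hstar : star (cvec u + Complex.I • cvec v) = cvec u - Complex.I • cvec v := by
    rw [star_add, star_smul, star_cvec, star_cvec]
    simp [Complex.star_def, Complex.conj_I, neg_smul, sub_eq_add_neg]
  rw [hstar, Matrix.mulVec_add, Matrix.mulVec_smul, map_mulVec, map_mulVec,
    sub_dotProduct, dotProduct_add, dotProduct_add, smul_dotProduct, smul_dotProduct,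
    dotProduct_smul, dotProduct_smul, cvec_dot, cvec_dot, cvec_dot, cvec_dot]
  push_cast
  simp only [smul_eq_mul]
  ring_nf
  rw [Complex.I_sq]
  ring

end Helpers

section Main

lemma dot_mulVec_symm {n : Type*} [Fintype n] (M : Matrix n n ℝ) (u v : n → ℝ) :
    u ⬝ᵥ M *ᵥ v = v ⬝ᵥ Mᵀ *ᵥ u := by
  rw [Matrix.dotProduct_mulVec, ← Matrix.mulVec_transpose, dotProduct_comm]

lemma partA (m : ℕ) (hm : 0 < m) (A : Matrix (Fin (2*m)) (Fin (2*m)) ℝ)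
    (hA : A.PosDef) (d : Fin m → ℝ) (hd : IsSymplecticSpectrum A d)
    (u v : Fin (2*m) → ℝ) (huv : u ⬝ᵥ (JMat m) *ᵥ v = 1) :
    2 * d ⟨0, hm⟩ ≤ u ⬝ᵥ A *ᵥ u + v ⬝ᵥ A *ᵥ v := by
  obtain ⟨hmono, hpos, hcp⟩ := hd
  set d1 : ℝ := d ⟨0, hm⟩ with hd1
  have hd1pos : 0 < d1 := hpos _
  set J : Matrix (Fin (2*m)) (Fin (2*m)) ℝ := JMat m with hJ
  -- real square root
  have hApsd : A.PosSemidef := hA.posSemidef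
  open scoped MatrixOrder in set a : Matrix (Fin (2*m)) (Fin (2*m)) ℝ := CFC.sqrt A with ha
  open scoped MatrixOrder in have haa : a * a = A := CFC.sqrt_mul_sqrt_self A hApsd.nonneg
  open scoped MatrixOrder in have haherm : a.IsHermitian := (CFC.sqrt_nonneg A).posSemidef.1
  -- complexifications
  set ac : Matrix (Fin (2*m)) (Fin (2*m)) ℂ := a.map Complex.ofReal with hac
  set Ac : Matrix (Fin (2*m)) (Fin (2*m)) ℂ := A.map Complex.ofReal with hAc
  set Jc : Matrix (Fin (2*m)) (Fin (2*m)) ℂ := J.map Complex.ofReal with hJc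
  have hacac : ac * ac = Ac := by
    rw [hac, hAc, ← haa]
    exact (Matrix.map_mul (f := Complex.ofRealHom)).symm
  have hacherm : ac.IsHermitian := by
    rw [Matrix.IsHermitian, hac, ← Matrix.conjTranspose_map Complex.ofReal
      (fun x => by simp [Complex.star_def])]
    rw [haherm]
  have hJcH : Jcᴴ = -Jc := by
    rw [hJc, ← Matrix.conjTranspose_map Complex.ofReal (fun x => by simp [Complex.star_def])]
    have : Jᴴ = -J := by
      rw [show (Jᴴ : Matrix _ _ ℝ) = Jᵀ from rfl, hJ, JMat_transpose]
    rw [this]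
    ext i j; simp [Matrix.map_apply]
  have hJcJc : Jc * Jc = -1 := by
    have h' : Jc * Jc = (J * J).map Complex.ofReal :=
      (Matrix.map_mul (f := Complex.ofRealHom)).symm
    rw [h', hJ, JMat_mul_JMat]
    ext i j
    simp [Matrix.map_apply, Matrix.one_apply, apply_ite Complex.ofReal]
  -- invertibility of ac
  have hdetA : A.det ≠ 0 := hA.det_pos.ne'
  have hdeta : a.det ≠ 0 := by
    intro h
    apply hdetA
    rw [← haa, Matrix.det_mul, h, mul_zero]
  have hdetac : IsUnit ac.det := by
    have hd' : ac.det = Complex.ofRealHom a.det := by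
      rw [hac, RingHom.map_det]; rfl
    rw [hd']
    refine isUnit_iff_ne_zero.mpr ?_
    simpa using hdeta
  have hac1 : ac * ac⁻¹ = 1 := Matrix.mul_nonsing_inv _ hdetac
  have hac2 : ac⁻¹ * ac = 1 := Matrix.nonsing_inv_mul _ hdetac
  -- the hermitian matrix G'
  set G : Matrix (Fin (2*m)) (Fin (2*m)) ℂ := Complex.I • (ac * Jc * ac) with hG
  have hGherm : G.IsHermitian := by
    rw [Matrix.IsHermitian, hG, Matrix.conjTranspose_smul]
    rw [Matrix.conjTranspose_mul, Matrix.conjTranspose_mul, hacherm, hJcH]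
    simp [Complex.star_def, Complex.conj_I, Matrix.mul_neg, Matrix.neg_mul,
      Matrix.mul_assoc]
  have hGcp : G.charpoly = ∏ j, (X - C (d j : ℂ)) * (X + C (d j : ℂ)) := by
    rw [← hcp]
    have key : G = ac * (Complex.I • (Jc * Ac)) * ac⁻¹ := by
      rw [hG, Matrix.mul_smul, Matrix.smul_mul]
      congr 1
      rw [← hacac]
      simp only [Matrix.mul_assoc, hac1, Matrix.mul_one]
    rw [key, charpoly_conj_aux _ _ _ hac1]
  have hGinv : G⁻¹ = Complex.I • (ac⁻¹ * Jc * ac⁻¹) := by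
    refine Matrix.inv_eq_right_inv ?_
    rw [hG, Matrix.smul_mul, Matrix.mul_smul, smul_smul, Complex.I_mul_I]
    have : ac * Jc * ac * (ac⁻¹ * Jc * ac⁻¹) = -1 := by
      calc ac * Jc * ac * (ac⁻¹ * Jc * ac⁻¹)
          = ac * Jc * (ac * ac⁻¹) * Jc * ac⁻¹ := by simp only [Matrix.mul_assoc]
        _ = ac * (Jc * Jc) * ac⁻¹ := by rw [hac1]; simp only [Matrix.mul_one, Matrix.mul_assoc]
        _ = -(ac * ac⁻¹) := by rw [hJcJc]; simp [Matrix.mul_neg, Matrix.neg_mul]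
        _ = -1 := by rw [hac1]
    rw [this, neg_smul, one_smul, neg_neg]
  -- eigenvalue bound
  have hev : ∀ i, d1 ≤ |hGherm.eigenvalues i| :=
    eig_abs_bound hm d hmono hpos G hGherm hGcp
  -- quadratic forms
  set z : Fin (2*m) → ℂ := cvec u + Complex.I • cvec v with hz
  set w : Fin (2*m) → ℂ := ac *ᵥ z with hw
  have hstarw : star w = star z ᵥ* ac := by
    rw [hw, Matrix.star_mulVec, hacherm]
  have h1 : star w ⬝ᵥ w = star z ⬝ᵥ Ac *ᵥ z := by
    rw [hstarw, hw, ← Matrix.dotProduct_mulVec, Matrix.mulVec_mulVec, hacac]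
  have h2 : star w ⬝ᵥ G⁻¹ *ᵥ w = star z ⬝ᵥ (Complex.I • Jc) *ᵥ z := by
    have hmm : (Complex.I • (ac⁻¹ * Jc * ac⁻¹)) * ac = Complex.I • (ac⁻¹ * Jc) := by
      rw [Matrix.smul_mul]
      congr 1
      simp only [Matrix.mul_assoc]
      rw [hac2, Matrix.mul_one]
    have hmm2 : ac * (Complex.I • (ac⁻¹ * Jc)) = Complex.I • Jc := by
      rw [Matrix.mul_smul]
      congr 1
      rw [← Matrix.mul_assoc, hac1, Matrix.one_mul]
    rw [hGinv, hstarw, hw, Matrix.mulVec_mulVec, hmm, ← Matrix.dotProduct_mulVec,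
      Matrix.mulVec_mulVec, hmm2]
  -- symmetry facts
  have hAT : Aᵀ = A := hA.1
  have hsymm : u ⬝ᵥ A *ᵥ v = v ⬝ᵥ A *ᵥ u := by
    rw [dot_mulVec_symm, hAT]
  have hJskew : ∀ x y : Fin (2*m) → ℝ, x ⬝ᵥ J *ᵥ y = -(y ⬝ᵥ J *ᵥ x) := by
    intro x y
    rw [dot_mulVec_symm, hJ, JMat_transpose]
    simp [Matrix.neg_mulVec]
  have hQ1 : star z ⬝ᵥ Ac *ᵥ z = ((u ⬝ᵥ A *ᵥ u + v ⬝ᵥ A *ᵥ v : ℝ) : ℂ) := by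
    rw [hz, hAc, quadform_expand, hsymm]
    simp
  have hQ2 : star z ⬝ᵥ (Complex.I • Jc) *ᵥ z = -2 := by
    have expand : star z ⬝ᵥ Jc *ᵥ z =
        ((u ⬝ᵥ J *ᵥ u + v ⬝ᵥ J *ᵥ v : ℝ) : ℂ)
        + Complex.I * ((u ⬝ᵥ J *ᵥ v - v ⬝ᵥ J *ᵥ u : ℝ) : ℂ) := by
      rw [hz, hJc, quadform_expand]
    have huJu : u ⬝ᵥ J *ᵥ u = 0 := by have := hJskew u u; linarith
    have hvJv : v ⬝ᵥ J *ᵥ v = 0 := by have := hJskew v v; linarith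
    have hvJu : v ⬝ᵥ J *ᵥ u = -1 := by rw [hJskew v u, huv]
    rw [Matrix.smul_mulVec, dotProduct_smul, expand, huJu, hvJv, hvJu, huv]
    push_cast
    simp only [smul_eq_mul]
    ring_nf
    rw [Complex.I_sq]
    ring
  -- final
  have hbound := herm_inv_quadform_bound G hGherm d1 hd1pos hev w
  rw [h2, hQ2, h1, hQ1] at hbound
  have habs : ‖(-2 : ℂ)‖ = 2 := by norm_num
  rw [habs, Complex.ofReal_re] at hbound
  have h3 : d1 * 2 ≤ d1 * (d1⁻¹ * (u ⬝ᵥ A *ᵥ u + v ⬝ᵥ A *ᵥ v)) :=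
    mul_le_mul_of_nonneg_left hbound hd1pos.le
  rw [← mul_assoc, mul_inv_cancel₀ hd1pos.ne', one_mul] at h3
  linarith

lemma smul_quad {n : Type*} [Fintype n] (M : Matrix n n ℝ) (α β : ℝ) (p q : n → ℝ) :
    (α • p) ⬝ᵥ M *ᵥ (β • q) = α * β * (p ⬝ᵥ M *ᵥ q) := by
  rw [Matrix.mulVec_smul, smul_dotProduct, dotProduct_smul]
  simp [smul_eq_mul]; ring

lemma partB (m : ℕ) (hm : 0 < m) (A : Matrix (Fin (2*m)) (Fin (2*m)) ℝ)
    (hA : A.PosDef) (d : Fin m → ℝ) (hd : IsSymplecticSpectrum A d)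
    (y : ℝ) (hy : d ⟨0, hm⟩ ≤ y) :
    ∃ u v : Fin (2*m) → ℝ, u ⬝ᵥ (JMat m).mulVec v = 1 ∧
      y = (u ⬝ᵥ A.mulVec u + v ⬝ᵥ A.mulVec v) / 2 := by
  obtain ⟨hmono, hpos, hcp⟩ := hd
  set d1 : ℝ := d ⟨0, hm⟩ with hd1
  have hd1pos : 0 < d1 := hpos _
  set J : Matrix (Fin (2*m)) (Fin (2*m)) ℝ := JMat m with hJ
  set B : Matrix (Fin (2*m)) (Fin (2*m)) ℝ := J * A with hB
  set Bc : Matrix (Fin (2*m)) (Fin (2*m)) ℂ :=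
    (JMat m).map Complex.ofReal * A.map Complex.ofReal with hBc
  have hBcB : Bc = B.map Complex.ofReal := by
    rw [hBc, hB, hJ]
    exact (Matrix.map_mul (f := Complex.ofRealHom)).symm
  -- eigenvector for d1
  have hroot : (Matrix.charpoly (Complex.I • Bc)).eval (d1 : ℂ) = 0 := by
    rw [hcp]
    rw [eval_prod]
    apply Finset.prod_eq_zero (Finset.mem_univ (⟨0, hm⟩ : Fin m))
    simp [← hd1]
  have hdet : (Matrix.diagonal (fun _ => (d1:ℂ)) - Complex.I • Bc).det = 0 := by
    rw [← eval_charpoly']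
    exact hroot
  obtain ⟨x, hxne, hx0⟩ := Matrix.exists_mulVec_eq_zero_iff.mpr hdet
  have hx : (Complex.I • Bc) *ᵥ x = (d1 : ℂ) • x := by
    have h1 : Matrix.diagonal (fun _ => (d1:ℂ)) *ᵥ x = (d1:ℂ) • x := by
      funext i; simp [Matrix.mulVec_diagonal]
    rw [Matrix.sub_mulVec, h1] at hx0
    funext i
    have := congrFun hx0 i
    simp only [Pi.sub_apply, Pi.zero_apply, sub_eq_zero] at this
    rw [this]
  set p : Fin (2*m) → ℝ := fun i => (x i).re with hp
  set q : Fin (2*m) → ℝ := fun i => (x i).im with hq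
  have hentry : ∀ i, Complex.I * ((Bc *ᵥ x) i) = (d1:ℂ) * x i := by
    intro i
    have := congrFun hx i
    rw [Matrix.smul_mulVec] at this
    simpa using this
  have hcre : ∀ i, ((Bc *ᵥ x) i).re = (B *ᵥ p) i := by
    intro i
    rw [hBcB]
    simp only [Matrix.mulVec, dotProduct, Matrix.map_apply]
    rw [Complex.re_sum]
    congr 1; funext j
    simp [Complex.mul_re, hp]
  have hcim : ∀ i, ((Bc *ᵥ x) i).im = (B *ᵥ q) i := by
    intro i
    rw [hBcB]
    simp only [Matrix.mulVec, dotProduct, Matrix.map_apply]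
    rw [Complex.im_sum]
    congr 1; funext j
    simp [Complex.mul_im, hq]
  have hBp : B *ᵥ p = d1 • q := by
    funext i
    have := congrArg Complex.im (hentry i)
    simpa [Complex.mul_im, hcre i, hq, hp] using this
  have hBq : B *ᵥ q = (-d1) • p := by
    funext i
    have := congrArg Complex.re (hentry i)
    simp only [Complex.mul_re, Complex.I_re, Complex.I_im, Complex.ofReal_re,
      Complex.ofReal_im, zero_mul, one_mul, zero_sub] at this
    rw [hcim i] at this
    simp only [Pi.smul_apply, smul_eq_mul, neg_mul]
    have h' : (B *ᵥ q) i = -(d1 * (x i).re) := by linarith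
    exact h'
  -- p ≠ 0
  have hpne : p ≠ 0 := by
    intro h
    apply hxne
    have hq0 : q = 0 := by
      have : B *ᵥ p = 0 := by rw [h, Matrix.mulVec_zero]
      rw [hBp] at this
      have := smul_eq_zero.mp this
      rcases this with h' | h'
      · exact absurd h' hd1pos.ne'
      · exact h'
    funext i
    have h1 : (x i).re = 0 := congrFun h i
    have h2 : (x i).im = 0 := congrFun hq0 i
    exact Complex.ext h1 h2
  set pAp : ℝ := p ⬝ᵥ A *ᵥ p with hpApdef
  have hpAp : 0 < pAp := by
    have := hA.dotProduct_mulVec_pos hpne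
    simpa using this
  -- q in terms of p
  have hqp : q = d1⁻¹ • (B *ᵥ p) := by
    rw [hBp, smul_smul, inv_mul_cancel₀ hd1pos.ne', one_smul]
  have hJskew : ∀ s t : Fin (2*m) → ℝ, (J *ᵥ s) ⬝ᵥ t = -(s ⬝ᵥ (J *ᵥ t)) := by
    intro s t
    rw [dotProduct_comm, dot_mulVec_symm, hJ, JMat_transpose, Matrix.neg_mulVec,
      dotProduct_neg]
  have hqAq : q ⬝ᵥ A *ᵥ q = pAp := by
    have h1 : q ⬝ᵥ A *ᵥ q = d1⁻¹ * ((B *ᵥ p) ⬝ᵥ (A *ᵥ q)) := by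
      nth_rewrite 1 [hqp]
      rw [smul_dotProduct, smul_eq_mul]
    have h2 : (B *ᵥ p) ⬝ᵥ (A *ᵥ q) = d1 * pAp := by
      have hBp' : B *ᵥ p = J *ᵥ (A *ᵥ p) := by rw [hB, ← Matrix.mulVec_mulVec]
      rw [hBp', hJskew (A *ᵥ p) (A *ᵥ q)]
      have h3 : J *ᵥ (A *ᵥ q) = B *ᵥ q := by rw [hB, Matrix.mulVec_mulVec]
      rw [h3, hBq]
      rw [dotProduct_smul]
      have hsym : (A *ᵥ p) ⬝ᵥ p = pAp := by
        rw [dotProduct_comm, hpApdef]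
      simp only [smul_eq_mul, hsym]
      ring
    rw [h1, h2, ← mul_assoc, inv_mul_cancel₀ hd1pos.ne', one_mul]
  have hpJq : p ⬝ᵥ J *ᵥ q = -(d1⁻¹ * pAp) := by
    have hJJA : J * (J * A) = -A := by
      rw [← Matrix.mul_assoc, hJ, JMat_mul_JMat, neg_one_mul]
    have hJq : J *ᵥ q = d1⁻¹ • ((-A) *ᵥ p) := by
      rw [hqp, Matrix.mulVec_smul]
      congr 1
      rw [hB, Matrix.mulVec_mulVec, hJJA]
    rw [hJq, dotProduct_smul]
    rw [Matrix.neg_mulVec, dotProduct_neg]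
    simp only [smul_eq_mul, ← hpApdef]
    ring
  -- build the base point
  set α : ℝ := Real.sqrt (d1 / pAp) with hα
  have hα2 : α^2 = d1 / pAp := Real.sq_sqrt (by positivity)
  set u : Fin (2*m) → ℝ := α • p with hu
  set v : Fin (2*m) → ℝ := (-α) • q with hv
  have huv : u ⬝ᵥ J *ᵥ v = 1 := by
    rw [hu, hv, smul_quad, hpJq]
    have : α * -α = -(α^2) := by ring
    rw [this, hα2]
    field_simp
  have huAu : u ⬝ᵥ A *ᵥ u = d1 := by
    rw [hu, smul_quad, ← hpApdef]
    have : α * α = α^2 := by ring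
    rw [this, hα2]
    field_simp
  have hvAv : v ⬝ᵥ A *ᵥ v = d1 := by
    rw [hv, smul_quad, hqAq]
    have : -α * -α = α^2 := by ring
    rw [this, hα2]
    field_simp
  -- now scale to reach y
  set c : ℝ := y / d1 with hc
  have hc1 : 1 ≤ c := (le_div_iff₀ hd1pos).mpr (by linarith)
  set r : ℝ := Real.sqrt (c^2 - 1) with hr
  have hr2 : r^2 = c^2 - 1 := Real.sq_sqrt (by nlinarith)
  have hrnn : 0 ≤ r := Real.sqrt_nonneg _
  set s : ℝ := c + r with hs
  have hspos : 0 < s := by nlinarith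
  have hkey : s * (2*c - s) = 1 := by nlinarith [hr2]
  have hsinv : s⁻¹ = 2*c - s := inv_eq_of_mul_eq_one_right hkey
  set t : ℝ := Real.sqrt s with ht
  have ht2 : t^2 = s := Real.sq_sqrt hspos.le
  have htpos : 0 < t := Real.sqrt_pos.mpr hspos
  refine ⟨t • u, t⁻¹ • v, ?_, ?_⟩
  · rw [smul_quad, huv, mul_one, mul_inv_cancel₀ htpos.ne']
  · have h4 : t * t = s := by rw [← ht2]; ring
    have h5 : t⁻¹ * t⁻¹ = s⁻¹ := by rw [← mul_inv, h4]
    have hval1 : (t • u) ⬝ᵥ A *ᵥ (t • u) = s * d1 := by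
      rw [smul_quad A t t u u, huAu, h4]
    have hval2 : (t⁻¹ • v) ⬝ᵥ A *ᵥ (t⁻¹ • v) = s⁻¹ * d1 := by
      rw [smul_quad A t⁻¹ t⁻¹ v v, hvAv, h5]
    rw [hval1, hval2, hsinv]
    have : s * d1 + (2*c - s) * d1 = 2 * c * d1 := by ring
    rw [this, hc]
    field_simp

end Main

/-- for a `2m × 2m` real positive definite matrix `A`,
`W_s(A) = [d₁(A), ∞)` where `d₁(A)` is the smallest symplectic eigenvalue of `A`. -/
theorem statement6 (m : ℕ) (hm : 0 < m) (A : Matrix (Fin (2*m)) (Fin (2*m)) ℝ)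
    (hA : A.PosDef) (d : Fin m → ℝ) (hd : IsSymplecticSpectrum A d) :
    symplecticNumericalRange A = Set.Ici (d ⟨0, hm⟩) := by
  ext x
  simp only [symplecticNumericalRange, Set.mem_setOf_eq, Set.mem_Ici]
  constructor
  · rintro ⟨u, v, huv, rfl⟩
    have := partA m hm A hA d hd u v huv
    linarith
  · intro hx
    exact partB m hm A hA d hd x hx

end Szego
end
end

section
/- Let P be a k×k real positive definite matrix, let P̂ = P ⊕ P be the 2k×2k block diagonal matrix diag(P,P), and let K be the 2k×2k matrix [[0, I_k],[−I_k, 0]]. Then the infimum of the K-symplectic numerical range W_s^K(P̂) = { (⟨u,P̂u⟩ + ⟨v,P̂v⟩)/2 : u,v ∈ ℝ^{2k}, ⟨u, K v⟩ = 1 } equals the smallest eigenvalue of P. -/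
open Matrix

noncomputable section
namespace Szego

private lemma dot_self_nonneg {n : Type*} [Fintype n] (x : n → ℝ) : 0 ≤ x ⬝ᵥ x :=
  Finset.sum_nonneg fun i _ => mul_self_nonneg _

private lemma two_dot_le {n : Type*} [Fintype n] (x y : n → ℝ) :
    2 * (x ⬝ᵥ y) ≤ x ⬝ᵥ x + y ⬝ᵥ y := by
  have h := dot_self_nonneg (x - y)
  have hexp : (x - y) ⬝ᵥ (x - y) = x ⬝ᵥ x - 2 * (x ⬝ᵥ y) + y ⬝ᵥ y := by
    simp [sub_dotProduct, dotProduct_sub, dotProduct_comm y x]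
    ring
  linarith [hexp ▸ h]

private lemma quad_lower {k : ℕ} [DecidableEq (Fin k)] {P : Matrix (Fin k) (Fin k) ℝ}
    (hP : P.IsHermitian) (lam : ℝ) (hlam : ∀ i, lam ≤ hP.eigenvalues i) (x : Fin k → ℝ) :
    lam * (x ⬝ᵥ x) ≤ x ⬝ᵥ P *ᵥ x := by
  set U : Matrix (Fin k) (Fin k) ℝ := (hP.eigenvectorUnitary : Matrix (Fin k) (Fin k) ℝ) with hU
  set y : Fin k → ℝ := (star U) *ᵥ x with hy
  have hxw : ∀ w : Fin k → ℝ, x ⬝ᵥ (U *ᵥ w) = y ⬝ᵥ w := by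
    intro w
    rw [Matrix.dotProduct_mulVec]
    congr 1
    simp [hy, Matrix.star_eq_conjTranspose, Matrix.mulVec_transpose,
      Matrix.conjTranspose_eq_transpose_of_trivial]
  have hUU : U * star U = 1 := Matrix.mem_unitaryGroup_iff.mp hP.eigenvectorUnitary.2
  have hxx : x ⬝ᵥ x = y ⬝ᵥ y := by
    have : x = U *ᵥ y := by
      rw [hy, Matrix.mulVec_mulVec, hUU, Matrix.one_mulVec]
    nth_rewrite 2 [this]
    rw [hxw]
  have hquad : x ⬝ᵥ P *ᵥ x = ∑ i, hP.eigenvalues i * (y i * y i) := by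
    conv_lhs => rw [hP.spectral_theorem, Unitary.conjStarAlgAut_apply]
    rw [← Matrix.mulVec_mulVec, ← Matrix.mulVec_mulVec, hxw]
    simp only [dotProduct, Matrix.mulVec_diagonal, Function.comp_apply,
      RCLike.ofReal_real_eq_id, id_eq]
    exact Finset.sum_congr rfl fun i _ => by ring
  rw [hquad, hxx, dotProduct, Finset.mul_sum]
  exact Finset.sum_le_sum fun i _ =>
    mul_le_mul_of_nonneg_right (hlam i) (mul_self_nonneg _)

/-- for a `k × k` real positive definite matrix `P`, with
`P̂ = diag(P, P)` and `K = [[0, I],[-I, 0]]`, the infimum of the `K`-symplectic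
numerical range `{ (⟨u,P̂u⟩+⟨v,P̂v⟩)/2 : ⟨u,Kv⟩ = 1 }` equals the smallest
eigenvalue of `P`. -/
theorem statement7 (k : ℕ) (hk : 0 < k) (P : Matrix (Fin k) (Fin k) ℝ)
    (hP : P.PosDef) :
    haveI : Nonempty (Fin k) := Fin.pos_iff_nonempty.mp hk
    sInf { x : ℝ | ∃ u v : (Fin k ⊕ Fin k) → ℝ,
        u ⬝ᵥ (Matrix.fromBlocks (0 : Matrix (Fin k) (Fin k) ℝ) (1 : Matrix (Fin k) (Fin k) ℝ)
              (-1 : Matrix (Fin k) (Fin k) ℝ) (0 : Matrix (Fin k) (Fin k) ℝ)).mulVec v = 1 ∧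
        x = (u ⬝ᵥ (Matrix.fromBlocks P 0 0 P).mulVec u
              + v ⬝ᵥ (Matrix.fromBlocks P 0 0 P).mulVec v) / 2 }
      = ⨅ i : Fin k, hP.1.eigenvalues i := by
  haveI : Nonempty (Fin k) := Fin.pos_iff_nonempty.mp hk
  set lam : ℝ := ⨅ i : Fin k, hP.1.eigenvalues i with hlamdef
  have hlam_le : ∀ i, lam ≤ hP.1.eigenvalues i := fun i =>
    ciInf_le (Finite.bddBelow_range _) i
  obtain ⟨j, hj⟩ := Finite.exists_min hP.1.eigenvalues
  have hlam_eq : lam = hP.1.eigenvalues j :=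
    le_antisymm (ciInf_le (Finite.bddBelow_range _) j) (le_ciInf hj)
  have hlam_pos : 0 < lam := hlam_eq ▸ hP.eigenvalues_pos j
  -- the eigenvector for the smallest eigenvalue
  set w : Fin k → ℝ := ⇑(hP.1.eigenvectorBasis j) with hw
  have hPw : P *ᵥ w = lam • w := by
    rw [hw, hP.1.mulVec_eigenvectorBasis, hlam_eq]
  have hww : w ⬝ᵥ w = 1 := by
    have h1 : (inner ℝ (hP.1.eigenvectorBasis j) (hP.1.eigenvectorBasis j) : ℝ) = 1 := by
      rw [real_inner_self_eq_norm_sq, hP.1.eigenvectorBasis.orthonormal.1 j]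
      norm_num
    rw [EuclideanSpace.inner_eq_star_dotProduct] at h1
    simpa using h1
  -- membership: lam is in the set
  have hmem : lam ∈ { x : ℝ | ∃ u v : (Fin k ⊕ Fin k) → ℝ,
      u ⬝ᵥ (Matrix.fromBlocks (0 : Matrix (Fin k) (Fin k) ℝ) (1 : Matrix (Fin k) (Fin k) ℝ)
            (-1 : Matrix (Fin k) (Fin k) ℝ) (0 : Matrix (Fin k) (Fin k) ℝ)).mulVec v = 1 ∧
      x = (u ⬝ᵥ (Matrix.fromBlocks P 0 0 P).mulVec u
            + v ⬝ᵥ (Matrix.fromBlocks P 0 0 P).mulVec v) / 2 } := by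
    refine ⟨Sum.elim w 0, Sum.elim 0 w, ?_, ?_⟩
    · simp [Matrix.fromBlocks_mulVec, sumElim_dotProduct_sumElim, hww]
    · simp [Matrix.fromBlocks_mulVec, sumElim_dotProduct_sumElim, hPw,
        dotProduct_smul, hww, smul_eq_mul]
  -- lower bound
  have hlb : ∀ x ∈ { x : ℝ | ∃ u v : (Fin k ⊕ Fin k) → ℝ,
      u ⬝ᵥ (Matrix.fromBlocks (0 : Matrix (Fin k) (Fin k) ℝ) (1 : Matrix (Fin k) (Fin k) ℝ)
            (-1 : Matrix (Fin k) (Fin k) ℝ) (0 : Matrix (Fin k) (Fin k) ℝ)).mulVec v = 1 ∧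
      x = (u ⬝ᵥ (Matrix.fromBlocks P 0 0 P).mulVec u
            + v ⬝ᵥ (Matrix.fromBlocks P 0 0 P).mulVec v) / 2 }, lam ≤ x := by
    rintro x ⟨u, v, hc, rfl⟩
    set u1 := u ∘ Sum.inl with hu1
    set u2 := u ∘ Sum.inr with hu2
    set v1 := v ∘ Sum.inl with hv1
    set v2 := v ∘ Sum.inr with hv2
    have hu : u = Sum.elim u1 u2 := (Sum.elim_comp_inl_inr u).symm
    have hv : v = Sum.elim v1 v2 := (Sum.elim_comp_inl_inr v).symm
    rw [hu, hv] at hc ⊢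
    rw [Matrix.fromBlocks_mulVec] at hc
    simp only [Sum.elim_comp_inl, Sum.elim_comp_inr, Matrix.zero_mulVec, Matrix.one_mulVec,
      Matrix.neg_mulVec, zero_add, add_zero,
      sumElim_dotProduct_sumElim] at hc
    -- hc : u1 ⬝ᵥ v2 + u2 ⬝ᵥ -(1 *ᵥ v1) = 1  (roughly)
    have hc' : u1 ⬝ᵥ v2 + u2 ⬝ᵥ (-v1) = 1 := by
      simpa using hc
    have hAM1 : 2 * (u1 ⬝ᵥ v2) ≤ u1 ⬝ᵥ u1 + v2 ⬝ᵥ v2 := two_dot_le u1 v2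
    have hAM2 : 2 * (u2 ⬝ᵥ (-v1)) ≤ u2 ⬝ᵥ u2 + v1 ⬝ᵥ v1 := by
      have := two_dot_le u2 (-v1)
      simpa [dotProduct_neg, neg_dotProduct] using this
    have hS : 2 ≤ u1 ⬝ᵥ u1 + u2 ⬝ᵥ u2 + v1 ⬝ᵥ v1 + v2 ⬝ᵥ v2 := by linarith
    have hq1 := quad_lower hP.1 lam hlam_le u1
    have hq2 := quad_lower hP.1 lam hlam_le u2
    have hq3 := quad_lower hP.1 lam hlam_le v1
    have hq4 := quad_lower hP.1 lam hlam_le v2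
    have hval : (Sum.elim u1 u2 ⬝ᵥ (Matrix.fromBlocks P 0 0 P) *ᵥ Sum.elim u1 u2
        + Sum.elim v1 v2 ⬝ᵥ (Matrix.fromBlocks P 0 0 P) *ᵥ Sum.elim v1 v2)
        = (u1 ⬝ᵥ P *ᵥ u1 + u2 ⬝ᵥ P *ᵥ u2) + (v1 ⬝ᵥ P *ᵥ v1 + v2 ⬝ᵥ P *ᵥ v2) := by
      simp [Matrix.fromBlocks_mulVec, sumElim_dotProduct_sumElim]
    rw [hval]
    have h2 : lam * 2 ≤ lam * (u1 ⬝ᵥ u1 + u2 ⬝ᵥ u2 + v1 ⬝ᵥ v1 + v2 ⬝ᵥ v2) :=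
      mul_le_mul_of_nonneg_left hS hlam_pos.le
    nlinarith [hq1, hq2, hq3, hq4, h2]
  exact le_antisymm (csInf_le ⟨lam, hlb⟩ hmem) (le_csInf ⟨lam, hmem⟩ hlb)

end Szego
end
end
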